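/- Let μ be a tail generating measure and let C, C' be bivariate copulas admitting tail dependence functions. If there exists ε > 0 such that C(u,v) ≤ C'(u,v) for all (u,v) ∈ (0,ε)² (i.e. C' is more concordant in the tail than C), then λ_μ(C) ≤ λ_μ(C'). -/

import Mathlib

open MeasureTheory Filter Set

/-- A bivariate copula: `C : [0,1]² → [0,1]` with the grounded/marginal conditions and
the 2-increasing property. -/
def IsCopula (C : ℝ → ℝ → ℝ) : Prop :=
  (∀ u ∈ Icc (0:ℝ) 1, ∀ v ∈ Icc (0:ℝ) 1, C u v ∈ Icc (0:ℝ) 1) ∧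
  (∀ u ∈ Icc (0:ℝ) 1, C u 0 = 0 ∧ C 0 u = 0 ∧ C u 1 = u ∧ C 1 u = u) ∧
  (∀ u u' v v' : ℝ, u ∈ Icc (0:ℝ) 1 → u' ∈ Icc (0:ℝ) 1 →
    v ∈ Icc (0:ℝ) 1 → v' ∈ Icc (0:ℝ) 1 → u ≤ u' → v ≤ v' →
    0 ≤ C u' v' - C u' v - C u v' + C u v)

/-- `Λ` is the tail dependence function of `C`:
`Λ(u,v) = lim_{p↓0} C(pu,pv)/p` for every `(u,v) ∈ [0,∞)²`. -/
def HasTDF (C Λ : ℝ → ℝ → ℝ) : Prop :=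
  ∀ u v : ℝ, 0 ≤ u → 0 ≤ v →
    Tendsto (fun p : ℝ => C (p * u) (p * v) / p)
      (nhdsWithin (0:ℝ) (Ioi 0)) (nhds (Λ u v))

/-- A tail generating measure: a Borel probability measure on `[0,1]²` whose mass is not
concentrated on `{u = 0} ∪ {v = 0}`. -/
def IsTailGenMeasure (μ : Measure (ℝ × ℝ)) : Prop :=
  IsProbabilityMeasure μ ∧
  μ ((Icc (0:ℝ) 1 ×ˢ Icc (0:ℝ) 1)ᶜ) = 0 ∧
  μ {q : ℝ × ℝ | q.1 = 0 ∨ q.2 = 0} < 1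

/-- The μ-tail dependence measure: `λ_μ = (∫ Λ dμ) / (∫ min dμ)`, applied to
the tail dependence function `Λ` of the copula. -/
noncomputable def tdm (Λ : ℝ → ℝ → ℝ) (μ : Measure (ℝ × ℝ)) : ℝ :=
  (∫ q, Λ q.1 q.2 ∂μ) / (∫ q : ℝ × ℝ, min q.1 q.2 ∂μ)

section Aux

variable {C Λ : ℝ → ℝ → ℝ}

lemma cop_nonneg (hC : IsCopula C) {u v : ℝ} (hu : u ∈ Icc (0:ℝ) 1)
    (hv : v ∈ Icc (0:ℝ) 1) : 0 ≤ C u v := (hC.1 u hu v hv).1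

lemma cop_le_min (hC : IsCopula C) {u v : ℝ} (hu : u ∈ Icc (0:ℝ) 1)
    (hv : v ∈ Icc (0:ℝ) 1) : C u v ≤ min u v := by
  obtain ⟨h0, h2⟩ := hC.2
  have i01 : (0:ℝ) ∈ Icc (0:ℝ) 1 := ⟨le_refl _, zero_le_one⟩
  have i11 : (1:ℝ) ∈ Icc (0:ℝ) 1 := ⟨zero_le_one, le_refl _⟩
  have h1 := h2 0 u v 1 i01 hu hv i11 hu.1 hv.2
  have h2' := h2 u 1 0 v hu i11 i01 hv hu.2 hv.1
  have e1 := h0 u hu; have e2 := h0 v hv; have e3 := h0 1 i11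
  refine le_min ?_ ?_ <;> nlinarith [e1.1, e1.2.1, e1.2.2.1, e2.1, e2.2.1, e2.2.2.1,
    e2.2.2.2, e3.2.2.1]

/-- Lipschitz-type bound for a copula. -/
lemma cop_lip (hC : IsCopula C) {u u' v v' : ℝ} (hu : u ∈ Icc (0:ℝ) 1)
    (hu' : u' ∈ Icc (0:ℝ) 1) (hv : v ∈ Icc (0:ℝ) 1) (hv' : v' ∈ Icc (0:ℝ) 1) :
    |C u' v' - C u v| ≤ |u' - u| + |v' - v| := by
  obtain ⟨h0, h2⟩ := hC.2
  have i01 : (0:ℝ) ∈ Icc (0:ℝ) 1 := ⟨le_refl _, zero_le_one⟩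
  have i11 : (1:ℝ) ∈ Icc (0:ℝ) 1 := ⟨zero_le_one, le_refl _⟩
  -- first-coordinate Lipschitz
  have key1 : ∀ a b w : ℝ, a ∈ Icc (0:ℝ) 1 → b ∈ Icc (0:ℝ) 1 → w ∈ Icc (0:ℝ) 1 →
      |C a w - C b w| ≤ |a - b| := by
    intro a b w ha hb hw
    rcases le_total a b with h | h
    · have m := h2 a b 0 w ha hb i01 hw h hw.1
      have l := h2 a b w 1 ha hb hw i11 h hw.2
      have ea := h0 a ha; have eb := h0 b hb
      rw [abs_sub_comm, abs_of_nonneg (by nlinarith [ea.1, eb.1, ea.2.2.1, eb.2.2.1])]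
      rw [abs_sub_comm, abs_of_nonneg (by linarith)]
      nlinarith [ea.2.2.1, eb.2.2.1]
    · have m := h2 b a 0 w hb ha i01 hw h hw.1
      have l := h2 b a w 1 hb ha hw i11 h hw.2
      have ea := h0 a ha; have eb := h0 b hb
      rw [abs_of_nonneg (by nlinarith [ea.1, eb.1, ea.2.2.1, eb.2.2.1]),
        abs_of_nonneg (by linarith)]
      nlinarith [ea.2.2.1, eb.2.2.1]
  -- second-coordinate Lipschitz
  have key2 : ∀ a w w' : ℝ, a ∈ Icc (0:ℝ) 1 → w ∈ Icc (0:ℝ) 1 → w' ∈ Icc (0:ℝ) 1 →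
      |C a w' - C a w| ≤ |w' - w| := by
    intro a w w' ha hw hw'
    rcases le_total w w' with h | h
    · have m := h2 0 a w w' i01 ha hw hw' ha.1 h
      have l := h2 a 1 w w' ha i11 hw hw' ha.2 h
      have ew := h0 w hw; have ew' := h0 w' hw'
      rw [abs_of_nonneg (by nlinarith [ew.1, ew'.1, ew.2.1, ew'.2.1]),
        abs_of_nonneg (by linarith)]
      nlinarith [ew.2.2.2, ew'.2.2.2]
    · have m := h2 0 a w' w i01 ha hw' hw ha.1 h
      have l := h2 a 1 w' w ha i11 hw' hw ha.2 h
      have ew := h0 w hw; have ew' := h0 w' hw'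
      rw [abs_sub_comm, abs_of_nonneg (by nlinarith [ew.1, ew'.1, ew.2.1, ew'.2.1]),
        abs_sub_comm, abs_of_nonneg (by linarith)]
      nlinarith [ew.2.2.2, ew'.2.2.2]
  calc |C u' v' - C u v| = |(C u' v' - C u v') + (C u v' - C u v)| := by ring_nf
    _ ≤ |C u' v' - C u v'| + |C u v' - C u v| := abs_add_le _ _
    _ ≤ |u' - u| + |v' - v| := add_le_add (key1 u' u v' hu' hu hv') (key2 u v v' hu hv hv')

/-- Small positive `p` put `p*u` etc. in `[0,1]`. -/
lemma eventually_mem (u : ℝ) (hu : 0 ≤ u) :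
    ∀ᶠ p in nhdsWithin (0:ℝ) (Ioi 0), p * u ∈ Icc (0:ℝ) 1 := by
  have hδ : (0:ℝ) < 1 / (1 + u) := by positivity
  filter_upwards [Ioo_mem_nhdsGT hδ] with p hp
  constructor
  · exact mul_nonneg hp.1.le hu
  · have : p * u ≤ (1 / (1 + u)) * u := by
      apply mul_le_mul_of_nonneg_right hp.2.le hu
    have h2 : (1 / (1 + u)) * u ≤ 1 := by
      rw [div_mul_eq_mul_div, one_mul, div_le_one (by linarith)]; linarith
    linarith

lemma tdf_nonneg (hC : IsCopula C) (hΛ : HasTDF C Λ) {u v : ℝ} (hu : 0 ≤ u)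
    (hv : 0 ≤ v) : 0 ≤ Λ u v := by
  refine ge_of_tendsto (hΛ u v hu hv) ?_
  filter_upwards [eventually_mem u hu, eventually_mem v hv, self_mem_nhdsWithin]
    with p h1 h2 hp
  exact div_nonneg (cop_nonneg hC h1 h2) (le_of_lt hp)

lemma tdf_le_min (hC : IsCopula C) (hΛ : HasTDF C Λ) {u v : ℝ} (hu : 0 ≤ u)
    (hv : 0 ≤ v) : Λ u v ≤ min u v := by
  refine le_of_tendsto (hΛ u v hu hv) ?_
  filter_upwards [eventually_mem u hu, eventually_mem v hv, self_mem_nhdsWithin]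
    with p h1 h2 hp
  have hp' : (0:ℝ) < p := hp
  have := cop_le_min hC h1 h2
  have hmin : min (p * u) (p * v) = p * min u v := by
    rcases le_total u v with h | h
    · rw [min_eq_left h, min_eq_left (by nlinarith)]
    · rw [min_eq_right h, min_eq_right (by nlinarith)]
  rw [div_le_iff₀ hp']
  calc C (p * u) (p * v) ≤ min (p * u) (p * v) := this
    _ = min u v * p := by rw [hmin]; ring

/-- Lipschitz property of the tail dependence function. -/
lemma tdf_lip (hC : IsCopula C) (hΛ : HasTDF C Λ) {u v u' v' : ℝ} (hu : 0 ≤ u)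
    (hv : 0 ≤ v) (hu' : 0 ≤ u') (hv' : 0 ≤ v') :
    |Λ u' v' - Λ u v| ≤ |u' - u| + |v' - v| := by
  have ht : Tendsto (fun p : ℝ => |C (p * u') (p * v') / p - C (p * u) (p * v) / p|)
      (nhdsWithin (0:ℝ) (Ioi 0)) (nhds |Λ u' v' - Λ u v|) :=
    ((hΛ u' v' hu' hv').sub (hΛ u v hu hv)).abs
  refine le_of_tendsto ht ?_
  filter_upwards [eventually_mem u hu, eventually_mem v hv, eventually_mem u' hu',
    eventually_mem v' hv', self_mem_nhdsWithin] with p h1 h2 h1' h2' hp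
  have hp' : (0:ℝ) < p := hp
  have key := cop_lip hC h1 h1' h2 h2'
  have e1 : |p * u' - p * u| = p * |u' - u| := by
    rw [← mul_sub, abs_mul, abs_of_pos hp']
  have e2 : |p * v' - p * v| = p * |v' - v| := by
    rw [← mul_sub, abs_mul, abs_of_pos hp']
  rw [div_sub_div_same, abs_div, abs_of_pos hp', div_le_iff₀ hp']
  calc |C (p * u') (p * v') - C (p * u) (p * v)|
      ≤ |p * u' - p * u| + |p * v' - p * v| := key
    _ = (|u' - u| + |v' - v|) * p := by rw [e1, e2]; ring

end Aux

theorem tdm_monotone_tail_concordance (C C' Λ Λ' : ℝ → ℝ → ℝ)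
    (hC : IsCopula C) (hC' : IsCopula C')
    (hΛ : HasTDF C Λ) (hΛ' : HasTDF C' Λ')
    (μ : Measure (ℝ × ℝ)) (hμ : IsTailGenMeasure μ)
    (hconc : ∃ ε > 0, ∀ u v : ℝ, u ∈ Ioo (0:ℝ) ε → v ∈ Ioo (0:ℝ) ε → C u v ≤ C' u v) :
    tdm Λ μ ≤ tdm Λ' μ := by
  obtain ⟨hprob, hnull, hax⟩ := hμ
  haveI := hprob
  obtain ⟨ε, hε, hcc⟩ := hconc
  set s : Set (ℝ × ℝ) := Icc (0:ℝ) 1 ×ˢ Icc (0:ℝ) 1 with hs_def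
  have hs : MeasurableSet s := (measurableSet_Icc).prod measurableSet_Icc
  have haes : ∀ᵐ q ∂μ, q ∈ s := by
    rw [ae_iff]; exact hnull
  -- pointwise comparison Λ ≤ Λ' on [0,∞)²
  have hpt : ∀ u v : ℝ, 0 ≤ u → 0 ≤ v → Λ u v ≤ Λ' u v := by
    intro u v hu hv
    rcases eq_or_lt_of_le hu with rfl | hu'
    · have h1 : Λ 0 v ≤ min 0 v := tdf_le_min hC hΛ le_rfl hv
      have h2 : (0:ℝ) ≤ Λ' 0 v := tdf_nonneg hC' hΛ' le_rfl hv
      have : min (0:ℝ) v = 0 := min_eq_left hv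
      linarith [h1.trans_eq this]
    rcases eq_or_lt_of_le hv with rfl | hv'
    · have h1 : Λ u 0 ≤ min u 0 := tdf_le_min hC hΛ hu le_rfl
      have h2 : (0:ℝ) ≤ Λ' u 0 := tdf_nonneg hC' hΛ' hu le_rfl
      have : min u (0:ℝ) = 0 := min_eq_right hu
      linarith [h1.trans_eq this]
    have hδ : (0:ℝ) < min (ε / u) (ε / v) := lt_min (by positivity) (by positivity)
    refine le_of_tendsto_of_tendsto (hΛ u v hu hv) (hΛ' u v hu hv) ?_
    filter_upwards [Ioo_mem_nhdsGT hδ] with p hp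
    have hp1 : (0:ℝ) < p := hp.1
    have hpu : p * u ∈ Ioo (0:ℝ) ε := by
      constructor
      · positivity
      · have : p < ε / u := lt_of_lt_of_le hp.2 (min_le_left _ _)
        calc p * u < (ε / u) * u := by nlinarith
          _ = ε := by field_simp
    have hpv : p * v ∈ Ioo (0:ℝ) ε := by
      constructor
      · positivity
      · have : p < ε / v := lt_of_lt_of_le hp.2 (min_le_right _ _)
        calc p * v < (ε / v) * v := by nlinarith
          _ = ε := by field_simp
    exact div_le_div_of_nonneg_right (hcc _ _ hpu hpv) hp1.le
  -- continuity / measurability of Λ and Λ' on s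
  have hcontOn : ∀ (D Θ : ℝ → ℝ → ℝ), IsCopula D → HasTDF D Θ →
      ContinuousOn (fun q : ℝ × ℝ => Θ q.1 q.2) s := by
    intro D Θ hD hΘ
    have : LipschitzOnWith 2 (fun q : ℝ × ℝ => Θ q.1 q.2) s := by
      apply LipschitzOnWith.of_dist_le_mul
      intro x hx y hy
      have h1 := tdf_lip hD hΘ hy.1.1 hy.2.1 hx.1.1 hx.2.1
      rw [Real.dist_eq]
      have d1 : |x.1 - y.1| ≤ dist x y := by
        rw [Prod.dist_eq]; exact le_max_of_le_left (le_of_eq (Real.dist_eq _ _).symm)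
      have d2 : |x.2 - y.2| ≤ dist x y := by
        rw [Prod.dist_eq]; exact le_max_of_le_right (le_of_eq (Real.dist_eq _ _).symm)
      have : |Θ x.1 x.2 - Θ y.1 y.2| ≤ |x.1 - y.1| + |x.2 - y.2| := h1
      push_cast
      linarith
    exact this.continuousOn
  have hrestrict : μ.restrict s = μ := Measure.restrict_eq_self_of_ae_mem haes
  have hmeas : ∀ (D Θ : ℝ → ℝ → ℝ), IsCopula D → HasTDF D Θ →
      AEStronglyMeasurable (fun q : ℝ × ℝ => Θ q.1 q.2) μ := by
    intro D Θ hD hΘ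
    have := (hcontOn D Θ hD hΘ).aestronglyMeasurable (μ := μ) hs
    rwa [hrestrict] at this
  -- integrability
  have hint : ∀ (D Θ : ℝ → ℝ → ℝ), IsCopula D → HasTDF D Θ →
      Integrable (fun q : ℝ × ℝ => Θ q.1 q.2) μ := by
    intro D Θ hD hΘ
    refine Integrable.mono' (integrable_const (1:ℝ)) (hmeas D Θ hD hΘ) ?_
    filter_upwards [haes] with q hq
    have h0 : (0:ℝ) ≤ Θ q.1 q.2 := tdf_nonneg hD hΘ hq.1.1 hq.2.1
    have h1 : Θ q.1 q.2 ≤ min q.1 q.2 := tdf_le_min hD hΘ hq.1.1 hq.2.1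
    rw [Real.norm_eq_abs, abs_of_nonneg h0]
    exact h1.trans ((min_le_left _ _).trans hq.1.2)
  have hmint : Integrable (fun q : ℝ × ℝ => min q.1 q.2) μ := by
    refine Integrable.mono' (integrable_const (1:ℝ))
      ((continuous_fst.min continuous_snd).aestronglyMeasurable) ?_
    filter_upwards [haes] with q hq
    rw [Real.norm_eq_abs, abs_of_nonneg (le_min hq.1.1 hq.2.1)]
    exact (min_le_left _ _).trans hq.1.2
  -- numerator inequality
  have hnum : (∫ q, Λ q.1 q.2 ∂μ) ≤ ∫ q, Λ' q.1 q.2 ∂μ := by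
    refine integral_mono_ae (hint C Λ hC hΛ) (hint C' Λ' hC' hΛ') ?_
    filter_upwards [haes] with q hq
    exact hpt q.1 q.2 hq.1.1 hq.2.1
  -- denominator positivity
  have hden : 0 < ∫ q : ℝ × ℝ, min q.1 q.2 ∂μ := by
    have hnn : 0 ≤ᵐ[μ] fun q : ℝ × ℝ => min q.1 q.2 := by
      filter_upwards [haes] with q hq
      exact le_min hq.1.1 hq.2.1
    rcases lt_or_eq_of_le (integral_nonneg_of_ae hnn) with h | h
    · exact h
    exfalso
    have hz : (fun q : ℝ × ℝ => min q.1 q.2) =ᵐ[μ] 0 :=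
      (integral_eq_zero_iff_of_nonneg_ae hnn hmint).1 h.symm
    have hA : ∀ᵐ q ∂μ, q ∈ {q : ℝ × ℝ | q.1 = 0 ∨ q.2 = 0} := by
      filter_upwards [haes, hz] with q hq hq0
      simp only [Pi.zero_apply] at hq0
      rcases le_total q.1 q.2 with h' | h'
      · left; have := min_eq_left h'; rw [this] at hq0; exact hq0
      · right; have := min_eq_right h'; rw [this] at hq0; exact hq0
    have hcompl : μ {q : ℝ × ℝ | q.1 = 0 ∨ q.2 = 0}ᶜ = 0 := ae_iff.1 hA
    have : (1:ENNReal) ≤ μ {q : ℝ × ℝ | q.1 = 0 ∨ q.2 = 0} := by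
      have := measure_union_le (μ := μ) {q : ℝ × ℝ | q.1 = 0 ∨ q.2 = 0}
        {q : ℝ × ℝ | q.1 = 0 ∨ q.2 = 0}ᶜ
      rw [union_compl_self, hcompl, add_zero, measure_univ] at this
      exact this
    exact absurd hax (not_lt.2 this)
  -- conclude
  unfold tdm
  exact div_le_div_of_nonneg_right hnum hden.le
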